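/- Let X be a complete Riemannian manifold of bounded geometry with volume growth constant θ_X (i.e., V(a,r) ≤ w₂ e^{θ_X r} for all a and r), let f ∈ L¹_unif(X), p ≥ 1, and ω > θ_X. Then for each a ∈ X the function g_a(x) = exp(−ω·d(a,x)^p) f(x) belongs to L¹(X) and ‖g_a‖₁ ≤ c‖f‖_{1,unif}, where the constant c depends only on ω (and the geometry of X), not on a or f. -/
import Mathlib


open MeasureTheory Metric
open scoped ENNReal

/-- On a space with exponential volume growth (constant `θ`), for `f` in the
uniformly local `L¹` space, the function `x ↦ exp(-ω d(a,x)^p) f(x)` is in `L¹`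
with norm bounded by `c ‖f‖_{1,unif}`, the constant `c` depending only on `ω`
(and the geometry), not on `a` nor on `f`. -/
theorem exp_decay_mul_uniformlyLocalL1_integrable
    {X : Type*} [MetricSpace X] [MeasurableSpace X] [BorelSpace X]
    (μ : Measure X) (r₀ θ w₂ : ℝ) (hr₀ : 0 < r₀) (hθ : 0 < θ) (hw₂ : 0 < w₂)
    (hgrowth : ∀ (a : X) (r : ℝ), 0 < r → μ (ball a r) ≤ ENNReal.ofReal (w₂ * Real.exp (θ * r)))
    (hVi : ∀ r : ℝ, 0 < r → 0 < ⨅ x : X, μ (ball x r))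
    (p ω : ℝ) (hp : 1 ≤ p) (hω : θ < ω) :
    ∃ c : ℝ≥0∞, c ≠ ⊤ ∧ ∀ (a : X) (f : X → ℝ),
      (⨆ x : X, ∫⁻ y in ball x r₀, (‖f y‖₊ : ℝ≥0∞) ∂μ) ≠ ⊤ →
      ∫⁻ x, ENNReal.ofReal (Real.exp (-ω * dist a x ^ p)) * (‖f x‖₊ : ℝ≥0∞) ∂μ
        ≤ c * ⨆ x : X, ∫⁻ y in ball x r₀, (‖f y‖₊ : ℝ≥0∞) ∂μ := by
  classical
  have hω0 : 0 < ω := hθ.trans hω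
  set v := ⨅ x : X, μ (ball x (r₀ / 4)) with hv_def
  have hv0 : 0 < v := hVi _ (by positivity)
  -- Covering lemma: every ball of radius R is covered by finitely many r₀-balls,
  -- with a cardinality bound.
  have hcover : ∀ (b : X) (R : ℝ), 0 < R → ∃ t : Finset X,
      ball b R ⊆ ⋃ x ∈ t, ball x r₀ ∧
      (t.card : ℝ≥0∞) ≤ ENNReal.ofReal (w₂ * Real.exp (θ * (R + r₀ / 4))) / v := by
    intro b R hR
    set B := ENNReal.ofReal (w₂ * Real.exp (θ * (R + r₀ / 4))) with hB
    have hBtop : B ≠ ⊤ := ENNReal.ofReal_ne_top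
    set P : Finset X → Prop := fun t => (↑t : Set X) ⊆ ball b R ∧
      ∀ x ∈ t, ∀ y ∈ t, x ≠ y → r₀ / 2 ≤ dist x y with hPdef
    have hcard : ∀ t : Finset X, P t → (t.card : ℝ≥0∞) * v ≤ B := by
      rintro t ⟨hsub, hsep⟩
      have hdisj : (t : Set X).PairwiseDisjoint (fun x => ball x (r₀ / 4)) := by
        intro x hx y hy hxy
        exact ball_disjoint_ball (by linarith [hsep x hx y hy hxy])
      have hmeas : μ (⋃ x ∈ t, ball x (r₀ / 4)) = ∑ x ∈ t, μ (ball x (r₀ / 4)) :=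
        measure_biUnion_finset hdisj (fun x _ => measurableSet_ball)
      have h1 : (t.card : ℝ≥0∞) * v ≤ ∑ x ∈ t, μ (ball x (r₀ / 4)) := by
        calc (t.card : ℝ≥0∞) * v = ∑ _x ∈ t, v := by
              rw [Finset.sum_const, nsmul_eq_mul]
        _ ≤ ∑ x ∈ t, μ (ball x (r₀ / 4)) :=
              Finset.sum_le_sum fun x _ => iInf_le _ x
      have h2 : μ (⋃ x ∈ t, ball x (r₀ / 4)) ≤ μ (ball b (R + r₀ / 4)) := by
        refine measure_mono (Set.iUnion₂_subset fun x hx => ball_subset_ball' ?_)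
        have : dist x b < R := mem_ball.1 (hsub hx)
        linarith
      calc (t.card : ℝ≥0∞) * v ≤ μ (⋃ x ∈ t, ball x (r₀ / 4)) := hmeas ▸ h1
      _ ≤ μ (ball b (R + r₀ / 4)) := h2
      _ ≤ B := hgrowth b _ (by positivity)
    have hdivtop : B / v ≠ ⊤ := (ENNReal.div_lt_top hBtop hv0.ne').ne
    have hcard' : ∀ t : Finset X, P t → (t.card : ℝ≥0∞) ≤ B / v := fun t ht =>
      (ENNReal.le_div_iff_mul_le (Or.inl hv0.ne') (Or.inr hBtop)).2 (hcard t ht)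
    have hcardN : ∀ t : Finset X, P t → t.card ≤ ⌊(B / v).toReal⌋₊ := by
      intro t ht
      refine Nat.le_floor ?_
      have := ENNReal.toReal_mono hdivtop (hcard' t ht)
      simpa using this
    set C : Set ℕ := {n | ∃ t : Finset X, P t ∧ t.card = n} with hC
    have hC0 : (0 : ℕ) ∈ C := ⟨∅, ⟨by simp [hPdef], by simp [hPdef]⟩, rfl⟩
    have hCb : BddAbove C := ⟨⌊(B / v).toReal⌋₊, by
      rintro n ⟨t, ht, rfl⟩; exact hcardN t ht⟩
    obtain ⟨t, htP, htc⟩ := Nat.sSup_mem ⟨0, hC0⟩ hCb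
    refine ⟨t, ?_, hcard' t htP⟩
    intro z hz
    by_cases hzt : z ∈ t
    · exact Set.mem_biUnion hzt (mem_ball_self hr₀)
    · by_contra hcon
      have hfar : ∀ x ∈ t, r₀ ≤ dist z x := by
        intro x hx
        by_contra hlt
        push_neg at hlt
        exact hcon (Set.mem_biUnion hx (mem_ball.2 hlt))
      have hP' : P (insert z t) := by
        constructor
        · intro x hx
          rcases Finset.mem_insert.1 (by exact_mod_cast hx) with rfl | hx'
          · exact hz
          · exact htP.1 hx'
        · intro x hx y hy hxy
          rcases Finset.mem_insert.1 hx with rfl | hx' <;>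
            rcases Finset.mem_insert.1 hy with rfl | hy'
          · exact absurd rfl hxy
          · linarith [hfar y hy']
          · rw [dist_comm]; linarith [hfar x hx']
          · exact htP.2 x hx' y hy' hxy
      have hmem : t.card + 1 ∈ C :=
        ⟨insert z t, hP', by rw [Finset.card_insert_of_notMem hzt]⟩
      have := le_csSup hCb hmem
      omega
  -- Bound on the integral of ‖f‖ over a ball of radius R
  have hball : ∀ (f : X → ℝ) (b : X) (R : ℝ), 0 < R →
      ∫⁻ x in ball b R, (‖f x‖₊ : ℝ≥0∞) ∂μ ≤
        ENNReal.ofReal (w₂ * Real.exp (θ * (R + r₀ / 4))) / v *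
          ⨆ x : X, ∫⁻ y in ball x r₀, (‖f y‖₊ : ℝ≥0∞) ∂μ := by
    intro f b R hR
    obtain ⟨t, hcov, hle⟩ := hcover b R hR
    set S := ⨆ x : X, ∫⁻ y in ball x r₀, (‖f y‖₊ : ℝ≥0∞) ∂μ with hS
    calc ∫⁻ x in ball b R, (‖f x‖₊ : ℝ≥0∞) ∂μ
        ≤ ∫⁻ x in ⋃ x ∈ t, ball x r₀, (‖f x‖₊ : ℝ≥0∞) ∂μ := lintegral_mono_set hcov
      _ = ∫⁻ x in ⋃ x : t, ball (x : X) r₀, (‖f x‖₊ : ℝ≥0∞) ∂μ := by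
          rw [show (⋃ x ∈ t, ball x r₀) = ⋃ x : t, ball (x : X) r₀ from by ext y; simp]
      _ ≤ ∑' x : t, ∫⁻ y in ball (x : X) r₀, (‖f y‖₊ : ℝ≥0∞) ∂μ :=
          lintegral_iUnion_le _ _
      _ = ∑ x ∈ t, ∫⁻ y in ball x r₀, (‖f y‖₊ : ℝ≥0∞) ∂μ :=
          Finset.tsum_subtype t (fun x => ∫⁻ y in ball x r₀, (‖f y‖₊ : ℝ≥0∞) ∂μ)
      _ ≤ ∑ _x ∈ t, S := Finset.sum_le_sum fun x _ => le_iSup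
          (fun x : X => ∫⁻ y in ball x r₀, (‖f y‖₊ : ℝ≥0∞) ∂μ) x
      _ = (t.card : ℝ≥0∞) * S := by rw [Finset.sum_const, nsmul_eq_mul]
      _ ≤ _ := mul_le_mul_left hle S
  -- The elementary real inequality exp(-ω d^p) ≤ exp ω * exp (-(ω d))
  have hreal : ∀ d : ℝ, 0 ≤ d → Real.exp (-ω * d ^ p) ≤ Real.exp ω * Real.exp (-(ω * d)) := by
    intro d hd
    rw [← Real.exp_add]
    apply Real.exp_le_exp.2
    rcases le_total d 1 with h1 | h1
    · nlinarith [Real.rpow_nonneg hd p]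
    · have hdp : d ≤ d ^ p := by
        calc d = d ^ (1 : ℝ) := (Real.rpow_one d).symm
        _ ≤ d ^ p := Real.rpow_le_rpow_of_exponent_le h1 hp
      nlinarith
  -- the constant
  set q := Real.exp (θ - ω) with hq
  have hq0 : 0 ≤ q := Real.exp_nonneg _
  have hq1 : q < 1 := Real.exp_lt_one_iff.mpr (by linarith)
  set K := Real.exp ω * (w₂ * Real.exp (θ * (1 + r₀ / 4))) with hK
  have hK0 : 0 < K := by positivity
  have hsum : Summable fun n : ℕ => K * q ^ n :=
    (summable_geometric_of_lt_one hq0 hq1).mul_left K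
  refine ⟨(∑' n : ℕ, ENNReal.ofReal (K * q ^ n)) / v, ?_, ?_⟩
  · have : (∑' n : ℕ, ENNReal.ofReal (K * q ^ n)) = ENNReal.ofReal (∑' n : ℕ, K * q ^ n) :=
      (ENNReal.ofReal_tsum_of_nonneg (fun n => by positivity) hsum).symm
    rw [this]
    exact (ENNReal.div_lt_top ENNReal.ofReal_ne_top hv0.ne').ne
  intro a f _
  set S := ⨆ x : X, ∫⁻ y in ball x r₀, (‖f y‖₊ : ℝ≥0∞) ∂μ with hS
  set A : ℕ → Set X := fun n => ball a ((n : ℝ) + 1) \ ball a (n : ℝ) with hA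
  have hAmeas : ∀ n, MeasurableSet (A n) :=
    fun n => measurableSet_ball.diff measurableSet_ball
  have hU : ⋃ n, A n = Set.univ := by
    ext z
    simp only [Set.mem_iUnion, Set.mem_univ, iff_true]
    refine ⟨⌊dist z a⌋₊, ?_, ?_⟩
    · exact mem_ball.2 (Nat.lt_floor_add_one _)
    · simp only [mem_ball, not_lt]
      exact Nat.floor_le dist_nonneg
  have hdec : ∫⁻ x, ENNReal.ofReal (Real.exp (-ω * dist a x ^ p)) * (‖f x‖₊ : ℝ≥0∞) ∂μ
      ≤ ∑' n : ℕ, ∫⁻ x in A n,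
          ENNReal.ofReal (Real.exp (-ω * dist a x ^ p)) * (‖f x‖₊ : ℝ≥0∞) ∂μ := by
    conv_lhs => rw [← setLIntegral_univ, ← hU]
    exact lintegral_iUnion_le _ _
  have hterm : ∀ n : ℕ, ∫⁻ x in A n,
      ENNReal.ofReal (Real.exp (-ω * dist a x ^ p)) * (‖f x‖₊ : ℝ≥0∞) ∂μ
      ≤ ENNReal.ofReal (K * q ^ n) / v * S := by
    intro n
    have hKq : K * q ^ n =
        (Real.exp ω * Real.exp (-(ω * (n : ℝ)))) *
          (w₂ * Real.exp (θ * (((n : ℝ) + 1) + r₀ / 4))) := by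
      have hqn : q ^ n = Real.exp ((θ - ω) * (n : ℝ)) := by
        rw [hq, ← Real.exp_nat_mul]; ring_nf
      rw [hK, hqn]
      rw [show Real.exp ω * (w₂ * Real.exp (θ * (1 + r₀ / 4))) * Real.exp ((θ - ω) * (n : ℝ))
          = w₂ * Real.exp (ω + θ * (1 + r₀ / 4) + (θ - ω) * (n : ℝ)) by
        rw [Real.exp_add, Real.exp_add]; ring]
      rw [show Real.exp ω * Real.exp (-(ω * (n : ℝ))) *
            (w₂ * Real.exp (θ * (((n : ℝ) + 1) + r₀ / 4)))
          = w₂ * Real.exp (ω + -(ω * (n : ℝ)) + θ * (((n : ℝ) + 1) + r₀ / 4)) by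
        rw [Real.exp_add, Real.exp_add]; ring]
      rw [show ω + θ * (1 + r₀ / 4) + (θ - ω) * (n : ℝ)
          = ω + -(ω * (n : ℝ)) + θ * (((n : ℝ) + 1) + r₀ / 4) by ring]
    have step1 : ∫⁻ x in A n,
        ENNReal.ofReal (Real.exp (-ω * dist a x ^ p)) * (‖f x‖₊ : ℝ≥0∞) ∂μ
        ≤ ENNReal.ofReal (Real.exp ω * Real.exp (-(ω * (n : ℝ)))) *
            ∫⁻ x in A n, (‖f x‖₊ : ℝ≥0∞) ∂μ := by
      rw [← lintegral_const_mul' _ _ ENNReal.ofReal_ne_top]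
      refine setLIntegral_mono' (hAmeas n) ?_
      intro x hx
      refine mul_le_mul_left (ENNReal.ofReal_le_ofReal ?_) _
      have hdn : (n : ℝ) ≤ dist a x := by
        have := hx.2
        simp only [mem_ball, not_lt] at this
        rwa [dist_comm]
      calc Real.exp (-ω * dist a x ^ p)
          ≤ Real.exp ω * Real.exp (-(ω * dist a x)) := hreal _ dist_nonneg
        _ ≤ Real.exp ω * Real.exp (-(ω * (n : ℝ))) := by
            refine mul_le_mul_of_nonneg_left (Real.exp_le_exp.2 ?_) (Real.exp_nonneg _)
            nlinarith
    have step2 : ∫⁻ x in A n, (‖f x‖₊ : ℝ≥0∞) ∂μ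
        ≤ ENNReal.ofReal (w₂ * Real.exp (θ * (((n : ℝ) + 1) + r₀ / 4))) / v * S := by
      calc ∫⁻ x in A n, (‖f x‖₊ : ℝ≥0∞) ∂μ
          ≤ ∫⁻ x in ball a ((n : ℝ) + 1), (‖f x‖₊ : ℝ≥0∞) ∂μ :=
            lintegral_mono_set Set.diff_subset
        _ ≤ _ := hball f a ((n : ℝ) + 1) (by positivity)
    calc ∫⁻ x in A n, ENNReal.ofReal (Real.exp (-ω * dist a x ^ p)) * (‖f x‖₊ : ℝ≥0∞) ∂μ
        ≤ ENNReal.ofReal (Real.exp ω * Real.exp (-(ω * (n : ℝ)))) *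
            (ENNReal.ofReal (w₂ * Real.exp (θ * (((n : ℝ) + 1) + r₀ / 4))) / v * S) :=
          step1.trans (mul_le_mul_right step2 _)
      _ = ENNReal.ofReal (K * q ^ n) / v * S := by
          conv_rhs => rw [hKq, ENNReal.ofReal_mul
            (show (0:ℝ) ≤ Real.exp ω * Real.exp (-(ω * (n : ℝ))) by positivity)]
          simp only [div_eq_mul_inv]
          ac_rfl
  calc ∫⁻ x, ENNReal.ofReal (Real.exp (-ω * dist a x ^ p)) * (‖f x‖₊ : ℝ≥0∞) ∂μ
      ≤ ∑' n : ℕ, ∫⁻ x in A n,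
          ENNReal.ofReal (Real.exp (-ω * dist a x ^ p)) * (‖f x‖₊ : ℝ≥0∞) ∂μ := hdec
    _ ≤ ∑' n : ℕ, ENNReal.ofReal (K * q ^ n) / v * S := ENNReal.tsum_le_tsum hterm
    _ = (∑' n : ℕ, ENNReal.ofReal (K * q ^ n)) / v * S := by
        simp only [div_eq_mul_inv, mul_assoc, ENNReal.tsum_mul_right]
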